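/- (W construction, chain form) Let N ≥ 2 and consider the edge relation E on Fin N given by E a j ↔ (a = j ∨ a = 0 ∨ (a ≠ 0 ∧ (j : ℕ) + 1 = (a : ℕ))), with colors C a j = false if a = 0 and C a j = true if a ≠ 0. Then: (1) the perfect matchings of E are exactly the identity together with, for each k ≠ 0, the permutation σ_k defined by σ_k 0 = k, σ_k a = a − 1 for 1 ≤ a ≤ k, and σ_k a = a for a > k; so there are exactly N perfect matchings; (2) the outcome string of the identity is false exactly at coordinate 0 and the outcome string of σ_k is false exactly at coordinate k; hence the outcome strings of the perfect matchings are exactly the N strings with a single false coordinate, each arising from exactly one perfect matching (the N-partite W state). -/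

import Mathlib

open scoped Classical

namespace WChainAux

variable {n : ℕ}

lemma crInv_zero (k : Fin (n+1)) : (Fin.cycleRange k)⁻¹ 0 = k := by
  rw [Equiv.Perm.inv_eq_iff_eq]
  exact (Fin.cycleRange_self k).symm

lemma crInv_of_gt {k a : Fin (n+1)} (h : (k:ℕ) < (a:ℕ)) : (Fin.cycleRange k)⁻¹ a = a := by
  rw [Equiv.Perm.inv_eq_iff_eq]
  exact (Fin.cycleRange_of_gt h).symm

lemma val_pos_of_ne_zero {a : Fin (n+1)} (ha : a ≠ 0) : 0 < (a:ℕ) :=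
  Nat.pos_of_ne_zero (fun h => ha (Fin.ext (by simp [h])))

lemma crInv_of_le {k a : Fin (n+1)} (ha : a ≠ 0) (hak : (a:ℕ) ≤ (k:ℕ)) :
    (((Fin.cycleRange k)⁻¹ a : Fin (n+1)) : ℕ) + 1 = (a:ℕ) := by
  have ha' : 0 < (a:ℕ) := val_pos_of_ne_zero ha
  obtain ⟨b, hbval⟩ : ∃ b : Fin (n+1), (b:ℕ) = (a:ℕ) - 1 := ⟨⟨(a:ℕ)-1, by omega⟩, rfl⟩
  have hblt : b < k := by
    rw [Fin.lt_def]; omega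
  have hb : Fin.cycleRange k b = a := by
    rw [Fin.cycleRange_of_lt hblt]
    ext
    rw [Fin.val_add_one_of_lt]
    · omega
    · rw [Fin.lt_def]
      have := k.isLt
      simp only [Fin.val_last]
      omega
  have : (Fin.cycleRange k)⁻¹ a = b := Equiv.Perm.inv_eq_iff_eq.mpr hb.symm
  rw [this]
  omega

lemma pm_unique (σ : Equiv.Perm (Fin (n+1)))
    (hσ : ∀ a : Fin (n+1), a = σ a ∨ a = 0 ∨ (a ≠ 0 ∧ (σ a : ℕ) + 1 = (a : ℕ))) :
    σ = (Fin.cycleRange (σ 0))⁻¹ := by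
  set k := σ 0 with hk
  suffices h : ∀ m : ℕ, ∀ a : Fin (n+1), (a : ℕ) = m → σ a = (Fin.cycleRange k)⁻¹ a by
    exact Equiv.ext fun a => h a.val a rfl
  intro m
  induction m using Nat.strong_induction_on with
  | _ m ih =>
  intro a ham
  by_cases ha0 : a = 0
  · subst ha0; rw [crInv_zero]
  by_cases hak : (a:ℕ) ≤ (k:ℕ)
  · have haval : 0 < (a:ℕ) := val_pos_of_ne_zero ha0
    obtain ⟨b, hbval⟩ : ∃ b : Fin (n+1), (b:ℕ) = (a:ℕ) - 1 := ⟨⟨(a:ℕ)-1, by omega⟩, rfl⟩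
    obtain ⟨c, hc⟩ : ∃ c, σ c = b := ⟨σ⁻¹ _, Equiv.apply_symm_apply σ _⟩
    rcases hσ c with h1 | h2 | ⟨hc0, h3⟩
    · -- c = σ c = b : contradiction via induction
      have hcb : c = b := by rw [h1, hc]
      have hσb : σ b = b := by rwa [hcb] at hc
      by_cases hb0 : b = 0
      · have hkb : k = b := by rw [hk, ← hb0]; exact hσb
        have : (k:ℕ) = (b:ℕ) := by rw [hkb]
        omega
      · have hbm : (b:ℕ) < m := by omega
        have hIH := ih (b:ℕ) hbm b rfl
        rw [hσb] at hIH
        have h4 := crInv_of_le hb0 (show (b:ℕ) ≤ (k:ℕ) by omega)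
        rw [← hIH] at h4
        omega
    · subst h2
      have hkb : k = b := by rw [hk, hc]
      have : (k:ℕ) = (a:ℕ) - 1 := by rw [hkb, hbval]
      omega
    · rw [hc] at h3
      have hca : c = a := Fin.ext (by omega)
      subst hca
      have h4 := crInv_of_le ha0 hak
      exact Fin.ext (by rw [hc]; omega)
  · -- k < a
    push_neg at hak
    rcases hσ a with h1 | h2 | ⟨_, h3⟩
    · rw [crInv_of_gt hak]; exact h1.symm
    · exact absurd h2 ha0
    · exfalso
      by_cases hbk : ((σ a : Fin (n+1)) : ℕ) = (k:ℕ)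
      · have : σ a = σ 0 := by rw [← hk]; exact Fin.ext hbk
        exact ha0 (σ.injective this)
      · have hkb : (k:ℕ) < ((σ a : Fin (n+1)) : ℕ) := by omega
        have hbm : ((σ a : Fin (n+1)) : ℕ) < m := by omega
        have hIH := ih _ hbm (σ a) rfl
        rw [crInv_of_gt hkb] at hIH
        have : a = σ a := σ.injective hIH.symm
        rw [← this] at h3
        omega

lemma pm_of (k : Fin (n+1)) :
    ∀ a : Fin (n+1), a = (Fin.cycleRange k)⁻¹ a ∨ a = 0 ∨
      (a ≠ 0 ∧ (((Fin.cycleRange k)⁻¹ a : Fin (n+1)) : ℕ) + 1 = (a : ℕ)) := by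
  intro a
  by_cases ha0 : a = 0
  · exact Or.inr (Or.inl ha0)
  by_cases hak : (a:ℕ) ≤ (k:ℕ)
  · exact Or.inr (Or.inr ⟨ha0, crInv_of_le ha0 hak⟩)
  · exact Or.inl (crInv_of_gt (by omega)).symm

end WChainAux

/-- W construction, chain form: On `Fin N` (`N ≥ 2`) with edge relation
`E a j ↔ (a = j ∨ a = 0 ∨ (a ≠ 0 ∧ j + 1 = a))` and colors `C a j = false` iff `a = 0`:
(1) the perfect matchings of `E` are exactly the identity together with, for each
`k ≠ 0`, the permutation `σ_k` with `σ_k 0 = k`, `σ_k a = a - 1` for `1 ≤ a ≤ k`, and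
`σ_k a = a` for `a > k`; so there are exactly `N` of them;
(2) the outcome string of the identity is `false` exactly at coordinate `0` and that of
`σ_k` is `false` exactly at coordinate `k`; hence the outcome-string map is a bijection
from the perfect matchings onto the `N` strings with a single `false` coordinate
(the `N`-partite W state). -/
theorem w_chain_construction (N : ℕ) [NeZero N] (hN : 2 ≤ N)
    (E : Fin N → Fin N → Prop)
    (hE : ∀ a j, E a j ↔ (a = j ∨ a = 0 ∨ (a ≠ 0 ∧ (j : ℕ) + 1 = (a : ℕ))))
    (C : Fin N → Fin N → Bool)
    (hC : ∀ a j, C a j = if a = 0 then false else true) :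
    (∀ σ : Equiv.Perm (Fin N), (∀ a, E a (σ a)) ↔
      (σ = Equiv.refl (Fin N) ∨ ∃ k : Fin N, k ≠ 0 ∧ σ 0 = k ∧
        (∀ a : Fin N, a ≠ 0 → (a : ℕ) ≤ (k : ℕ) → (σ a : ℕ) + 1 = (a : ℕ)) ∧
        (∀ a : Fin N, (k : ℕ) < (a : ℕ) → σ a = a))) ∧
    ((Finset.univ.filter
      (fun σ : Equiv.Perm (Fin N) => ∀ a, E a (σ a))).card = N) ∧
    (∀ j : Fin N, C ((Equiv.refl (Fin N))⁻¹ j) j = false ↔ j = 0) ∧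
    (∀ σ : Equiv.Perm (Fin N), ∀ k : Fin N, k ≠ 0 → σ 0 = k →
      (∀ a : Fin N, a ≠ 0 → (a : ℕ) ≤ (k : ℕ) → (σ a : ℕ) + 1 = (a : ℕ)) →
      (∀ a : Fin N, (k : ℕ) < (a : ℕ) → σ a = a) →
      ∀ j : Fin N, C (σ⁻¹ j) j = false ↔ j = k) ∧
    Set.BijOn (fun σ : Equiv.Perm (Fin N) => fun j => C (σ⁻¹ j) j)
      {σ : Equiv.Perm (Fin N) | ∀ a, E a (σ a)}
      {s : Fin N → Bool | (Finset.univ.filter (fun j => s j = false)).card = 1} := by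
  obtain ⟨n, rfl⟩ : ∃ n, N = n + 1 := ⟨N - 1, by omega⟩
  have hPM : ∀ σ : Equiv.Perm (Fin (n+1)), (∀ a, E a (σ a)) ↔
      ∀ a : Fin (n+1), a = σ a ∨ a = 0 ∨ (a ≠ 0 ∧ (σ a : ℕ) + 1 = (a:ℕ)) := by
    intro σ
    constructor
    · intro h a; exact (hE a (σ a)).1 (h a)
    · intro h a; exact (hE a (σ a)).2 (h a)
  -- the outcome helper
  have hout : ∀ σ : Equiv.Perm (Fin (n+1)), ∀ j, (C (σ⁻¹ j) j = false ↔ j = σ 0) := by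
    intro σ j
    rw [hC]
    rcases eq_or_ne (σ⁻¹ j) 0 with h | h
    · have hj : j = σ 0 := Equiv.Perm.inv_eq_iff_eq.mp h
      simp [h, hj]
    · rw [if_neg h]
      simp only [Bool.true_eq_false, false_iff]
      intro hj
      exact h (by rw [hj]; exact Equiv.symm_apply_apply σ _)
  have part1 : ∀ σ : Equiv.Perm (Fin (n+1)), (∀ a, E a (σ a)) ↔
      (σ = Equiv.refl (Fin (n+1)) ∨ ∃ k : Fin (n+1), k ≠ 0 ∧ σ 0 = k ∧
        (∀ a : Fin (n+1), a ≠ 0 → (a : ℕ) ≤ (k : ℕ) → (σ a : ℕ) + 1 = (a : ℕ)) ∧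
        (∀ a : Fin (n+1), (k : ℕ) < (a : ℕ) → σ a = a)) := by
    intro σ
    constructor
    · intro h
      have hu := WChainAux.pm_unique σ ((hPM σ).1 h)
      by_cases hk0 : σ 0 = 0
      · left
        rw [hu, hk0, Fin.cycleRange_zero, inv_one]
        rfl
      · right
        refine ⟨σ 0, hk0, rfl, ?_, ?_⟩
        · intro a ha hak
          rw [hu]
          exact WChainAux.crInv_of_le ha hak
        · intro a hka
          rw [hu]
          exact WChainAux.crInv_of_gt hka
    · rintro (rfl | ⟨k, hk0, h0, hle, hgt⟩) a
      · exact (hE a a).2 (Or.inl rfl)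
      · rcases eq_or_ne a 0 with rfl | ha0
        · exact (hE _ _).2 (Or.inr (Or.inl rfl))
        · by_cases hak : (a:ℕ) ≤ (k:ℕ)
          · exact (hE _ _).2 (Or.inr (Or.inr ⟨ha0, hle a ha0 hak⟩))
          · exact (hE _ _).2 (Or.inl (hgt a (by omega)).symm)
  refine ⟨part1, ?_, ?_, ?_, ?_⟩
  · -- cardinality
    have hinj : Function.Injective (fun k : Fin (n+1) => (Fin.cycleRange k)⁻¹) := by
      intro k l h
      have := congrArg (fun σ : Equiv.Perm (Fin (n+1)) => σ 0) h
      simpa [WChainAux.crInv_zero] using this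
    have hset : (Finset.univ.filter fun σ : Equiv.Perm (Fin (n+1)) => ∀ a, E a (σ a))
        = Finset.univ.image (fun k : Fin (n+1) => (Fin.cycleRange k)⁻¹) := by
      ext σ
      simp only [Finset.mem_filter, Finset.mem_image, Finset.mem_univ, true_and]
      constructor
      · intro h
        exact ⟨σ 0, (WChainAux.pm_unique σ ((hPM σ).1 h)).symm⟩
      · rintro ⟨k, rfl⟩
        exact (hPM _).2 (WChainAux.pm_of k)
    rw [hset, Finset.card_image_of_injective _ hinj, Finset.card_univ, Fintype.card_fin]
  · -- identity outcome
    intro j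
    rw [hout]
    simp
  · -- σ_k outcome
    intro σ k hk h0 _ _ j
    rw [hout, h0]
  · -- bijection
    refine ⟨?_, ?_, ?_⟩
    · intro σ _
      simp only [Set.mem_setOf_eq]
      have hfil : (Finset.univ.filter fun j => C (σ⁻¹ j) j = false) = {σ 0} := by
        ext j
        simpa using hout σ j
      rw [hfil, Finset.card_singleton]
    · intro σ hσ τ hτ heq
      have h0 : σ 0 = τ 0 := by
        have h1 : C (σ⁻¹ (σ 0)) (σ 0) = C (τ⁻¹ (σ 0)) (σ 0) := congrFun heq (σ 0)
        have hL : C (σ⁻¹ (σ 0)) (σ 0) = false := (hout σ (σ 0)).2 rfl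
        exact (hout τ (σ 0)).1 (by rw [← h1]; exact hL)
      rw [WChainAux.pm_unique σ ((hPM σ).1 hσ), WChainAux.pm_unique τ ((hPM τ).1 hτ), h0]
    · intro s hs
      obtain ⟨k, hk⟩ := Finset.card_eq_one.mp hs
      have hsk : ∀ j, s j = false ↔ j = k := by
        intro j
        have := Finset.ext_iff.mp hk j
        simpa using this
      refine ⟨(Fin.cycleRange k)⁻¹, (hPM _).2 (WChainAux.pm_of k), ?_⟩
      funext j
      show C (((Fin.cycleRange k)⁻¹)⁻¹ j) j = s j
      have h1 : (C (((Fin.cycleRange k)⁻¹)⁻¹ j) j = false) ↔ j = k := by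
        rw [hout, WChainAux.crInv_zero]
      have h2 := hsk j
      by_cases hj : j = k
      · exact (h1.mpr hj).trans (h2.mpr hj).symm
      · have hs' : s j = true := by
          cases hcase : s j
          · exact absurd (h2.mp hcase) hj
          · rfl
        rw [hs']
        cases hcase : C (((Fin.cycleRange k)⁻¹)⁻¹ j) j
        · exact absurd (h1.mp hcase) hj
        · rfl
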